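/- Let S be a continuous adapted process on a filtered probability space satisfying the usual conditions. If S is sticky with respect to deterministic times (i.e., for every δ>0 and t < T, P(sup_{t≤u≤T}|S_u - S_t| < δ | ℱ_t) > 0 a.s.), and if the conditional law of S given ℱ_t equals the conditional law of S given a larger σ-field 𝒢_t ⊇ ℱ_t for each t, then S is sticky at deterministic times with respect to the enlarged filtration (𝒢_t). -/

import Mathlib

open MeasureTheory Set

/-- **Stickiness at deterministic times transfers to an enlarged filtration.**
Let `S` be continuous adapted to `(ℱₜ)`.  If `S` is sticky at deterministic times with
respect to `(ℱₜ)`, i.e. `P(sup_{t ≤ u ≤ T} |S_u - S_t| < δ | ℱₜ) > 0` a.s. for all `δ > 0`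
and `t ∈ [0,T)`, and if the conditional law of (the path of) `S` given `ℱₜ` coincides with
its conditional law given the larger σ-field `𝒢ₜ ⊇ ℱₜ` for each `t`, then `S` is sticky at
deterministic times with respect to `(𝒢ₜ)`. -/
theorem stmt10 {Ω : Type*} [mΩ : MeasurableSpace Ω] (μ : Measure Ω) [IsProbabilityMeasure μ]
    (T : ℝ) (hT : 0 < T)
    (F G : ℝ → MeasurableSpace Ω)
    (hFmono : ∀ s t : ℝ, s ≤ t → F s ≤ F t) (hGmono : ∀ s t : ℝ, s ≤ t → G s ≤ G t)
    (hFG : ∀ t, F t ≤ G t) (hGle : ∀ t, G t ≤ mΩ)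
    (S : ℝ → Ω → ℝ)
    (hScont : ∀ ω, ContinuousOn (fun t => S t ω) (Set.Icc 0 T))
    (hSadapt : ∀ t ∈ Set.Icc (0:ℝ) T, Measurable[F t] (S t))
    (hlaw : ∀ t ∈ Set.Icc (0:ℝ) T, ∀ A : Set Ω,
      MeasurableSet[⨆ u ∈ Set.Icc (0:ℝ) T, MeasurableSpace.comap (S u) inferInstance] A →
      μ[A.indicator (fun _ => (1:ℝ)) | F t] =ᵐ[μ] μ[A.indicator (fun _ => (1:ℝ)) | G t])
    (hsticky : ∀ δ : ℝ, 0 < δ → ∀ t ∈ Set.Ico (0:ℝ) T,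
      ∀ᵐ ω ∂μ, 0 < (μ[Set.indicator {ω' | ∀ u ∈ Set.Icc t T, |S u ω' - S t ω'| < δ}
        (fun _ => (1:ℝ)) | F t]) ω) :
    ∀ δ : ℝ, 0 < δ → ∀ t ∈ Set.Ico (0:ℝ) T,
      ∀ᵐ ω ∂μ, 0 < (μ[Set.indicator {ω' | ∀ u ∈ Set.Icc t T, |S u ω' - S t ω'| < δ}
        (fun _ => (1:ℝ)) | G t]) ω := by
  intro δ hδ t ht
  have htT : t ≤ T := ht.2.le
  have htIcc : t ∈ Set.Icc (0:ℝ) T := ⟨ht.1, htT⟩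
  set A : Set Ω := {ω' | ∀ u ∈ Set.Icc t T, |S u ω' - S t ω'| < δ} with hA
  set M := ⨆ u ∈ Set.Icc (0:ℝ) T, MeasurableSpace.comap (S u) inferInstance with hM
  have hSM : ∀ u ∈ Set.Icc (0:ℝ) T, Measurable[M] (S u) := by
    intro u hu
    rw [measurable_iff_comap_le]
    exact le_biSup (fun u => MeasurableSpace.comap (S u) inferInstance) hu
  set D : Set ℝ := insert t (Set.Icc t T ∩ Set.range ((↑) : ℚ → ℝ)) with hD
  have hDsub : D ⊆ Set.Icc t T := by
    intro x hx
    rcases hx with rfl | hx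
    · exact ⟨le_refl x, htT⟩
    · exact hx.1
  have hDc : D.Countable :=
    (Set.Countable.mono Set.inter_subset_right (Set.countable_range _)).insert t
  -- A rewritten as a countable union/intersection
  have hAeq : A = ⋃ n : ℕ, ⋂ q ∈ D, {ω | |S q ω - S t ω| ≤ δ - 1/(n+1)} := by
    ext ω
    simp only [hA, Set.mem_setOf_eq, Set.mem_iUnion, Set.mem_iInter]
    constructor
    · intro h
      have hcont : ContinuousOn (fun u => |S u ω - S t ω|) (Set.Icc t T) :=
        (((hScont ω).mono (Set.Icc_subset_Icc ht.1 le_rfl)).sub continuousOn_const).abs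
      obtain ⟨x, hx, hmax⟩ :=
        isCompact_Icc.exists_isMaxOn (Set.nonempty_Icc.2 htT) hcont
      obtain ⟨n, hn⟩ := exists_nat_one_div_lt (sub_pos.2 (h x hx))
      refine ⟨n, fun q hq => ?_⟩
      have h1 : |S q ω - S t ω| ≤ |S x ω - S t ω| := hmax (hDsub hq)
      have h2 := h x hx
      linarith
    · rintro ⟨n, hn⟩ u hu
      have hc : (0:ℝ) < 1/(n+1) := by positivity
      have key : |S u ω - S t ω| ≤ δ - 1/(n+1) := by
        rcases eq_or_lt_of_le hu.1 with rfl | htu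
        · simpa using hn t (Set.mem_insert _ _)
        · -- choose rationals approaching u from below
          have hq : ∀ k : ℕ, ∃ q : ℚ, max t (u - 1/(k+1)) < (q:ℝ) ∧ (q:ℝ) < u := by
            intro k
            apply exists_rat_btwn
            apply max_lt htu
            have : (0:ℝ) < 1/(k+1) := by positivity
            linarith
          choose q hq1 hq2 using hq
          have hqmem : ∀ k, (q k : ℝ) ∈ Set.Icc t T :=
            fun k => ⟨(le_max_left _ _).trans (hq1 k).le, (hq2 k).le.trans hu.2⟩
          have hqD : ∀ k, (q k : ℝ) ∈ D :=
            fun k => Or.inr ⟨hqmem k, ⟨q k, rfl⟩⟩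
          have htend : Filter.Tendsto (fun k => (q k : ℝ)) Filter.atTop (nhds u) := by
            have hlow : Filter.Tendsto (fun k : ℕ => u - 1/(k+1 : ℝ)) Filter.atTop (nhds u) := by
              have := tendsto_one_div_add_atTop_nhds_zero_nat (𝕜 := ℝ)
              simpa using Filter.Tendsto.sub tendsto_const_nhds this
            refine tendsto_of_tendsto_of_tendsto_of_le_of_le hlow tendsto_const_nhds
              (fun k => ?_) (fun k => (hq2 k).le)
            exact ((le_max_right _ _).trans (hq1 k).le)
          have hcw : ContinuousWithinAt (fun v => |S v ω - S t ω|) (Set.Icc t T) u :=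
            ((((hScont ω).mono (Set.Icc_subset_Icc ht.1 le_rfl)).sub
              continuousOn_const).abs).continuousWithinAt hu
          have htend2 : Filter.Tendsto (fun k => |S (q k) ω - S t ω|) Filter.atTop
              (nhds (|S u ω - S t ω|)) := by
            apply hcw.tendsto.comp
            rw [tendsto_nhdsWithin_iff]
            exact ⟨htend, Filter.Eventually.of_forall hqmem⟩
          exact le_of_tendsto htend2 (Filter.Eventually.of_forall fun k => hn _ (hqD k))
      linarith
  have hAmeas : MeasurableSet[M] A := by
    rw [hAeq]
    refine MeasurableSet.iUnion fun n => MeasurableSet.biInter hDc fun q hq => ?_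
    have hq0T : q ∈ Set.Icc (0:ℝ) T := ⟨ht.1.trans (hDsub hq).1, (hDsub hq).2⟩
    exact measurableSet_le (((hSM q hq0T).sub (hSM t htIcc)).abs) measurable_const
  have heq := hlaw t htIcc A hAmeas
  filter_upwards [heq, hsticky δ hδ t ht] with ω h1 h2
  rw [← h1]
  exact h2
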